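/- Let G = (A, B, E) be a d-mixing bipartite graph, let T ⊆ B be nonempty, and let 0 < ε < 1/2. If |A| > 2d²/(|T|ε²), then there exists a ∈ A with (1/2 - ε)|T| ≤ |Γ(a) ∩ T| ≤ (1/2 + ε)|T|. -/

import Mathlib

open Finset Real

/-- Number of edges between `T ⊆ A` and `S ⊆ B` in the bipartite graph with
edge relation `E`. -/
def eCount {A B : Type*} (E : A → B → Bool) (T : Finset A) (S : Finset B) : ℕ :=
  ((T ×ˢ S).filter fun p => E p.1 p.2 = true).card

/-- A bipartite graph on parts `A`, `B` with edge relation `E` is `d`-mixing if for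
all `T ⊆ A`, `S ⊆ B`, `|e(S,T) - |S||T|/2| ≤ d √(|S||T|)`. -/
def IsMixing {A B : Type*} [Fintype A] [Fintype B] (E : A → B → Bool) (d : ℝ) : Prop :=
  ∀ (T : Finset A) (S : Finset B),
    |(eCount E T S : ℝ) - T.card * S.card / 2| ≤ d * Real.sqrt (T.card * S.card)

lemma eCount_eq_sum {A B : Type*} (E : A → B → Bool) (S : Finset A) (T : Finset B) :
    eCount E S T = ∑ a ∈ S, (T.filter fun b => E a b = true).card := by
  classical
  unfold eCount
  rw [Finset.card_filter, Finset.sum_product]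
  simp only [Finset.card_filter]

lemma small_card {A B : Type*} [Fintype A] [Fintype B] {E : A → B → Bool} {d ε : ℝ}
    (hmix : IsMixing E d) (S : Finset A) (T : Finset B) (hT : (0:ℝ) < T.card)
    (hε : 0 < ε)
    (h : ε * (S.card * T.card) ≤ |(eCount E S T : ℝ) - S.card * T.card / 2|) :
    (S.card : ℝ) ≤ d ^ 2 / (ε ^ 2 * T.card) := by
  have hx : (0:ℝ) ≤ (S.card : ℝ) * T.card := by positivity
  have h2 : ε * (S.card * T.card) ≤ d * Real.sqrt (S.card * T.card) :=
    h.trans (hmix S T)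
  rcases eq_or_lt_of_le hx with hx0 | hx0
  · have hS0 : (S.card : ℝ) = 0 := by
      nlinarith [Nat.cast_nonneg' (α := ℝ) S.card]
    rw [hS0]
    exact div_nonneg (sq_nonneg d) (mul_nonneg (sq_nonneg ε) (Nat.cast_nonneg _))
  · have hs : Real.sqrt ((S.card : ℝ) * T.card) > 0 := Real.sqrt_pos.mpr hx0
    have hds : ε * Real.sqrt ((S.card : ℝ) * T.card) ≤ d := by
      have : ε * (Real.sqrt ((S.card : ℝ) * T.card) * Real.sqrt ((S.card : ℝ) * T.card))
          ≤ d * Real.sqrt ((S.card : ℝ) * T.card) := by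
        rwa [Real.mul_self_sqrt hx]
      rw [mul_comm d _] at this
      nlinarith
    have hsq : ε ^ 2 * ((S.card : ℝ) * T.card) ≤ d ^ 2 := by
      have := mul_self_le_mul_self (by positivity) hds
      have hrw : Real.sqrt ((S.card : ℝ) * T.card) * Real.sqrt ((S.card : ℝ) * T.card)
          = (S.card : ℝ) * T.card := Real.mul_self_sqrt hx
      nlinarith
    rw [le_div_iff₀ (by positivity)]
    nlinarith

theorem exists_balanced_vertex
    {A B : Type*} [Fintype A] [Fintype B] (E : A → B → Bool) (d : ℝ)
    (hmix : IsMixing E d) (T : Finset B) (hT : T.Nonempty) (ε : ℝ)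
    (hε : 0 < ε) (hε' : ε < 1/2)
    (hA : 2 * d ^ 2 / (T.card * ε ^ 2) < (Fintype.card A : ℝ)) :
    ∃ a : A, (1/2 - ε) * T.card ≤ ((T.filter fun b => E a b = true).card : ℝ) ∧
      ((T.filter fun b => E a b = true).card : ℝ) ≤ (1/2 + ε) * T.card := by
  classical
  by_contra hcon
  push_neg at hcon
  have hTpos : (0:ℝ) < T.card := by exact_mod_cast Finset.card_pos.mpr hT
  set deg : A → ℝ := fun a => ((T.filter fun b => E a b = true).card : ℝ) with hdeg
  set Slo : Finset A := Finset.univ.filter (fun a => deg a < (1/2 - ε) * T.card) with hSlo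
  set Shi : Finset A := Finset.univ.filter (fun a => (1/2 + ε) * T.card < deg a) with hShi
  have hcover : (Fintype.card A : ℝ) ≤ Slo.card + Shi.card := by
    have hsub : Finset.univ ⊆ Slo ∪ Shi := by
      intro a _
      rcases lt_or_ge (deg a) ((1/2 - ε) * T.card) with h | h
      · exact Finset.mem_union_left _ (Finset.mem_filter.mpr ⟨Finset.mem_univ a, h⟩)
      · have := hcon a h
        exact Finset.mem_union_right _ (Finset.mem_filter.mpr ⟨Finset.mem_univ a, this⟩)
    have := (Finset.card_le_card hsub).trans (Finset.card_union_le _ _)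
    rw [Finset.card_univ] at this
    exact_mod_cast this
  -- bound Slo
  have hlo : (Slo.card : ℝ) ≤ d ^ 2 / (ε ^ 2 * T.card) := by
    apply small_card hmix Slo T hTpos hε
    have hsum : (eCount E Slo T : ℝ) ≤ Slo.card * ((1/2 - ε) * T.card) := by
      rw [eCount_eq_sum, Nat.cast_sum]
      calc ∑ a ∈ Slo, deg a ≤ ∑ _a ∈ Slo, (1/2 - ε) * T.card := by
            apply Finset.sum_le_sum
            intro a ha
            exact le_of_lt (by simpa [hSlo] using (Finset.mem_filter.mp ha).2)
        _ = Slo.card * ((1/2 - ε) * T.card) := by rw [Finset.sum_const, nsmul_eq_mul]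
    rw [abs_sub_comm, le_abs]
    left
    nlinarith [Nat.cast_nonneg' (α := ℝ) Slo.card]
  -- bound Shi
  have hhi : (Shi.card : ℝ) ≤ d ^ 2 / (ε ^ 2 * T.card) := by
    apply small_card hmix Shi T hTpos hε
    have hsum : (Shi.card : ℝ) * ((1/2 + ε) * T.card) ≤ (eCount E Shi T : ℝ) := by
      rw [eCount_eq_sum, Nat.cast_sum]
      calc (Shi.card : ℝ) * ((1/2 + ε) * T.card) = ∑ _a ∈ Shi, (1/2 + ε) * T.card := by
            rw [Finset.sum_const, nsmul_eq_mul]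
        _ ≤ ∑ a ∈ Shi, deg a := by
            apply Finset.sum_le_sum
            intro a ha
            exact le_of_lt (by simpa [hShi] using (Finset.mem_filter.mp ha).2)
    rw [le_abs]
    left
    nlinarith [Nat.cast_nonneg' (α := ℝ) Shi.card]
  have : (Fintype.card A : ℝ) ≤ 2 * d ^ 2 / (T.card * ε ^ 2) := by
    calc (Fintype.card A : ℝ) ≤ Slo.card + Shi.card := hcover
      _ ≤ 2 * (d ^ 2 / (ε ^ 2 * T.card)) := by linarith
      _ = 2 * d ^ 2 / (T.card * ε ^ 2) := by ring
  linarith
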